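/- arXiv:2204.13619 — 3 statements merged into one kernel-verified Lean document; each statement's English description precedes it below -/
import Mathlib

section
/- Let f_i : ℝ^d → ℝ for i = 1,…,n be differentiable, μ-strongly convex and L-smooth (∇f_i is L-Lipschitz), and let λ_1,…,λ_k > 0 and γ_1,…,γ_n > 0. Let ({θ̂'_i}, {ŵ_j}, ŵ̄) be the unique minimizer of F_MTL({θ_i},{w_j},w̄) = Σ_{j=1}^k ( Σ_{i∈I_j} ( f_i(θ_i) + (γ_i/2)‖θ_i − w_j‖² ) + (λ_j/2)‖w_j − w̄‖² ). Set α_j = λ_j/(λ_j + Σ_{i∈I_j} γ_i) for each j, and let {θ̂_i} be the unique minimizer of F({θ_i}) = Σ_{j=1}^k Σ_{i∈I_j} ( f_i(θ_i) + ((1−α_j)γ_i/2)‖θ_i − θ̄_j‖² + (α_j γ_i/2)‖θ_i − θ̄‖² ). Then θ̂_i = θ̂'_i for all i = 1,…,n. -/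
open scoped BigOperators

noncomputable section

/-- `E d` is the Euclidean space ℝ^d. -/
abbrev E (d : ℕ) := EuclideanSpace ℝ (Fin d)

/-- The cluster `I_j` of clients assigned to cluster `j` by the assignment map `c`. -/
def clSet {n k : ℕ} (c : Fin n → Fin k) (j : Fin k) : Finset (Fin n) :=
  Finset.univ.filter fun i => c i = j

/-- The weighted cluster average θ̄_j = (Σ_{i∈I_j} γ_i θ_i)/(Σ_{i∈I_j} γ_i). -/
def clAvg {n k d : ℕ} (c : Fin n → Fin k) (γ : Fin n → ℝ) (j : Fin k)
    (θ : Fin n → E d) : E d :=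
  (∑ i ∈ clSet c j, γ i)⁻¹ • ∑ i ∈ clSet c j, γ i • θ i

/-- The global average θ̄ = (Σ_j Σ_{i∈I_j} α_j γ_i θ_i)/(Σ_j Σ_{i∈I_j} α_j γ_i). -/
def glAvg {n k d : ℕ} (c : Fin n → Fin k) (γ : Fin n → ℝ) (α : Fin k → ℝ)
    (θ : Fin n → E d) : E d :=
  (∑ j, ∑ i ∈ clSet c j, α j * γ i)⁻¹ • ∑ j, ∑ i ∈ clSet c j, (α j * γ i) • θ i

variable {V : Type*} [NormedAddCommGroup V] [InnerProductSpace ℝ V]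

lemma var_decomp {ι : Type*} (s : Finset ι) (w : ι → ℝ) (x : ι → V) (b : V)
    (hS : (∑ i ∈ s, w i) ≠ 0) :
    ∑ i ∈ s, w i * ‖x i - b‖^2
      = (∑ i ∈ s, w i * ‖x i - (∑ i ∈ s, w i)⁻¹ • ∑ i ∈ s, w i • x i‖^2)
        + (∑ i ∈ s, w i) * ‖(∑ i ∈ s, w i)⁻¹ • (∑ i ∈ s, w i • x i) - b‖^2 := by
  set S := ∑ i ∈ s, w i with hSdef
  set m : V := S⁻¹ • ∑ i ∈ s, w i • x i with hm
  have hSm : S • m = ∑ i ∈ s, w i • x i := by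
    rw [hm, smul_smul, mul_inv_cancel₀ hS, one_smul]
  have hzero : ∑ i ∈ s, w i • (x i - m) = 0 := by
    simp only [smul_sub, Finset.sum_sub_distrib, ← Finset.sum_smul, ← hSdef, hSm, sub_self]
  have expand : ∀ i, ‖x i - b‖^2
      = ‖x i - m‖^2 + 2*(inner ℝ (x i - m) (m - b) : ℝ) + ‖m - b‖^2 := by
    intro i
    have h := norm_add_sq_real (x i - m) (m - b)
    rw [sub_add_sub_cancel] at h
    linarith
  rw [Finset.sum_congr rfl (fun i _ => by rw [expand i])]
  have hsum : ∑ i ∈ s, w i * (2*(inner ℝ (x i - m) (m - b) : ℝ)) = 0 := by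
    have : ∑ i ∈ s, w i * (2*(inner ℝ (x i - m) (m - b) : ℝ))
        = 2 * (inner ℝ (∑ i ∈ s, w i • (x i - m)) (m - b) : ℝ) := by
      rw [sum_inner, Finset.mul_sum]
      refine Finset.sum_congr rfl fun i _ => ?_
      rw [real_inner_smul_left]; ring
    rw [this, hzero, inner_zero_left, mul_zero]
  calc ∑ i ∈ s, w i * (‖x i - m‖^2 + 2*(inner ℝ (x i - m) (m - b) : ℝ) + ‖m - b‖^2)
      = (∑ i ∈ s, w i * ‖x i - m‖^2) + (∑ i ∈ s, w i * (2*(inner ℝ (x i - m) (m - b) : ℝ)))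
        + (∑ i ∈ s, w i) * ‖m - b‖^2 := by
        rw [Finset.sum_mul]
        simp only [← Finset.sum_add_distrib]
        exact Finset.sum_congr rfl fun i _ => by ring
    _ = _ := by rw [hsum]; ring

variable {V : Type*} [NormedAddCommGroup V] [InnerProductSpace ℝ V]

lemma two_point (S l : ℝ) (hS : 0 < S) (hl : 0 < l) (a b w : V) :
    S*‖a-w‖^2 + l*‖w-b‖^2
      = (S+l)*‖w - (S+l)⁻¹ • (S•a + l•b)‖^2 + (S*l/(S+l))*‖a-b‖^2 := by
  have hT : S + l ≠ 0 := by positivity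
  have h1 : ‖a-w‖^2 = ‖a‖^2 - 2*(inner ℝ a w : ℝ) + ‖w‖^2 := norm_sub_sq_real a w
  have h2 : ‖w-b‖^2 = ‖w‖^2 - 2*(inner ℝ w b : ℝ) + ‖b‖^2 := norm_sub_sq_real w b
  have h3 : ‖a-b‖^2 = ‖a‖^2 - 2*(inner ℝ a b : ℝ) + ‖b‖^2 := norm_sub_sq_real a b
  have h4 : ‖w - (S+l)⁻¹ • (S•a + l•b)‖^2
      = ‖w‖^2 - 2*((S+l)⁻¹ * (S * (inner ℝ a w : ℝ) + l * (inner ℝ w b : ℝ)))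
        + (S+l)⁻¹^2 * (S^2*‖a‖^2 + 2*(S*l)*(inner ℝ a b : ℝ) + l^2*‖b‖^2) := by
    rw [norm_sub_sq_real, norm_smul, real_inner_smul_right, inner_add_right,
      real_inner_smul_right, real_inner_smul_right]
    rw [mul_pow]
    have h5 : ‖S•a + l•b‖^2 = S^2*‖a‖^2 + 2*(S*l)*(inner ℝ a b : ℝ) + l^2*‖b‖^2 := by
      rw [norm_add_sq_real, real_inner_smul_left, real_inner_smul_right, norm_smul, norm_smul,
        mul_pow, mul_pow]
      simp only [Real.norm_eq_abs, abs_of_pos hS, abs_of_pos hl]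
      ring
    rw [h5, real_inner_comm w a]
    have : ‖(S+l)⁻¹‖ = (S+l)⁻¹ := by
      rw [Real.norm_eq_abs, abs_of_pos (by positivity)]
    rw [this]
  rw [h1, h2, h3, h4]
  field_simp
  ring

lemma key_identity {n k d : ℕ} (hk : 0 < k) (c : Fin n → Fin k) (hc : ∀ j, (clSet c j).Nonempty)
    (f : Fin n → E d → ℝ) (lam : Fin k → ℝ) (hlam : ∀ j, 0 < lam j)
    (γ : Fin n → ℝ) (hγ : ∀ i, 0 < γ i) (α : Fin k → ℝ)
    (hα : ∀ j, α j = lam j / (lam j + ∑ i ∈ clSet c j, γ i))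
    (θ : Fin n → E d) (w : Fin k → E d) (wb : E d) :
    (∑ j, ((∑ i ∈ clSet c j, (f i (θ i) + γ i / 2 * ‖θ i - w j‖ ^ 2))
          + lam j / 2 * ‖w j - wb‖ ^ 2))
    = (∑ j, ∑ i ∈ clSet c j,
        (f i (θ i) + (1 - α j) * γ i / 2 * ‖θ i - clAvg c γ j θ‖ ^ 2
          + α j * γ i / 2 * ‖θ i - glAvg c γ α θ‖ ^ 2))
      + (∑ j, ((∑ i ∈ clSet c j, γ i) + lam j)/2 * ‖w j - ((∑ i ∈ clSet c j, γ i) + lam j)⁻¹ •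
          ((∑ i ∈ clSet c j, γ i) • clAvg c γ j θ + lam j • wb)‖^2)
      + (∑ j, α j * ∑ i ∈ clSet c j, γ i)/2 * ‖wb - glAvg c γ α θ‖^2 := by
  classical
  have hS : ∀ j, (0:ℝ) < ∑ i ∈ clSet c j, γ i :=
    fun j => Finset.sum_pos (fun i _ => hγ i) (hc j)
  have hβ : ∀ j, α j * (∑ i ∈ clSet c j, γ i)
      = (∑ i ∈ clSet c j, γ i) * lam j / ((∑ i ∈ clSet c j, γ i) + lam j) := by
    intro j
    have h1 : lam j + (∑ i ∈ clSet c j, γ i) ≠ 0 := (add_pos (hlam j) (hS j)).ne'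
    have h2 : (∑ i ∈ clSet c j, γ i) + lam j ≠ 0 := (add_pos (hS j) (hlam j)).ne'
    rw [hα j]
    field_simp
    ring
  have hg : glAvg c γ α θ = (∑ j, α j * ∑ i ∈ clSet c j, γ i)⁻¹
      • ∑ j, (α j * ∑ i ∈ clSet c j, γ i) • clAvg c γ j θ := by
    rw [glAvg]
    congr 1
    · congr 1
      exact Finset.sum_congr rfl fun j _ => by rw [← Finset.mul_sum]
    · refine Finset.sum_congr rfl fun j _ => ?_
      rw [clAvg, smul_smul, mul_assoc, mul_inv_cancel₀ (hS j).ne', mul_one, Finset.smul_sum]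
      exact Finset.sum_congr rfl fun i _ => mul_smul _ _ _
  have hBpos : (0:ℝ) < ∑ j, α j * ∑ i ∈ clSet c j, γ i := by
    refine Finset.sum_pos (fun j _ => ?_) ⟨⟨0, hk⟩, Finset.mem_univ _⟩
    rw [hβ j]
    exact div_pos (mul_pos (hS j) (hlam j)) (add_pos (hS j) (hlam j))
  have stepD : ∑ j, (α j * ∑ i ∈ clSet c j, γ i) * ‖clAvg c γ j θ - wb‖^2
      = (∑ j, (α j * ∑ i ∈ clSet c j, γ i) * ‖clAvg c γ j θ - glAvg c γ α θ‖^2)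
        + (∑ j, α j * ∑ i ∈ clSet c j, γ i) * ‖glAvg c γ α θ - wb‖^2 := by
    have h := var_decomp (V := E d) Finset.univ (fun j => α j * ∑ i ∈ clSet c j, γ i)
      (fun j => clAvg c γ j θ) wb hBpos.ne'
    rw [← hg] at h
    exact h
  have hL : ∀ j, (∑ i ∈ clSet c j, (f i (θ i) + γ i / 2 * ‖θ i - w j‖ ^ 2))
        + lam j / 2 * ‖w j - wb‖ ^ 2
      = (∑ i ∈ clSet c j, f i (θ i)) + (∑ i ∈ clSet c j, γ i * ‖θ i - clAvg c γ j θ‖^2)/2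
        + ((∑ i ∈ clSet c j, γ i) + lam j)/2 * ‖w j - ((∑ i ∈ clSet c j, γ i) + lam j)⁻¹ •
            ((∑ i ∈ clSet c j, γ i) • clAvg c γ j θ + lam j • wb)‖^2
        + (α j * ∑ i ∈ clSet c j, γ i) * ‖clAvg c γ j θ - wb‖ ^ 2 / 2 := by
    intro j
    have e1 : ∑ i ∈ clSet c j, (f i (θ i) + γ i / 2 * ‖θ i - w j‖ ^ 2)
        = (∑ i ∈ clSet c j, f i (θ i)) + (∑ i ∈ clSet c j, γ i * ‖θ i - w j‖^2)/2 := by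
      rw [Finset.sum_add_distrib, Finset.sum_div]
      congr 1
      exact Finset.sum_congr rfl fun i _ => by ring
    have stepA : ∑ i ∈ clSet c j, γ i * ‖θ i - w j‖^2
        = (∑ i ∈ clSet c j, γ i * ‖θ i - clAvg c γ j θ‖^2)
          + (∑ i ∈ clSet c j, γ i) * ‖clAvg c γ j θ - w j‖^2 :=
      var_decomp (clSet c j) γ θ (w j) (hS j).ne'
    have stepC := two_point (∑ i ∈ clSet c j, γ i) (lam j) (hS j) (hlam j)
      (clAvg c γ j θ) wb (w j)
    rw [e1, stepA, hβ j]
    linarith [stepC]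
  have hR : ∀ j, ∑ i ∈ clSet c j,
        (f i (θ i) + (1 - α j) * γ i / 2 * ‖θ i - clAvg c γ j θ‖ ^ 2
          + α j * γ i / 2 * ‖θ i - glAvg c γ α θ‖ ^ 2)
      = (∑ i ∈ clSet c j, f i (θ i)) + (∑ i ∈ clSet c j, γ i * ‖θ i - clAvg c γ j θ‖^2)/2
        + (α j * ∑ i ∈ clSet c j, γ i) * ‖clAvg c γ j θ - glAvg c γ α θ‖^2 / 2 := by
    intro j
    have stepB : ∑ i ∈ clSet c j, γ i * ‖θ i - glAvg c γ α θ‖^2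
        = (∑ i ∈ clSet c j, γ i * ‖θ i - clAvg c γ j θ‖^2)
          + (∑ i ∈ clSet c j, γ i) * ‖clAvg c γ j θ - glAvg c γ α θ‖^2 :=
      var_decomp (clSet c j) γ θ (glAvg c γ α θ) (hS j).ne'
    have a1 : ∑ i ∈ clSet c j, (1 - α j) * γ i / 2 * ‖θ i - clAvg c γ j θ‖ ^ 2
        = (1 - α j)/2 * (∑ i ∈ clSet c j, γ i * ‖θ i - clAvg c γ j θ‖^2) := by
      rw [Finset.mul_sum]
      exact Finset.sum_congr rfl fun i _ => by ring
    have a2 : ∑ i ∈ clSet c j, α j * γ i / 2 * ‖θ i - glAvg c γ α θ‖ ^ 2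
        = α j/2 * (∑ i ∈ clSet c j, γ i * ‖θ i - glAvg c γ α θ‖^2) := by
      rw [Finset.mul_sum]
      exact Finset.sum_congr rfl fun i _ => by ring
    rw [Finset.sum_add_distrib, Finset.sum_add_distrib, a1, a2, stepB]
    ring
  rw [Finset.sum_congr rfl fun j _ => hL j, Finset.sum_congr rfl fun j _ => hR j]
  simp only [Finset.sum_add_distrib, ← Finset.sum_div]
  rw [stepD, norm_sub_rev (glAvg c γ α θ) wb]
  linarith

lemma mid_norm_sq {V : Type*} [NormedAddCommGroup V] [InnerProductSpace ℝ V] (a b : V) :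
    ‖(2:ℝ)⁻¹ • (a+b)‖^2 = ‖a‖^2/2 + ‖b‖^2/2 - ‖a-b‖^2/4 := by
  have h1 : ‖a+b‖^2 = ‖a‖^2 + 2*(inner ℝ a b : ℝ) + ‖b‖^2 := norm_add_sq_real a b
  have h2 : ‖a-b‖^2 = ‖a‖^2 - 2*(inner ℝ a b : ℝ) + ‖b‖^2 := norm_sub_sq_real a b
  rw [norm_smul, mul_pow]
  have h3 : ‖(2:ℝ)⁻¹‖ = (2:ℝ)⁻¹ := by
    rw [Real.norm_eq_abs, abs_of_pos]; norm_num
  rw [h3, h1]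
  rw [h2]
  ring

lemma strong_mid {V : Type*} [NormedAddCommGroup V] [InnerProductSpace ℝ V]
    (f : V → ℝ) (μ : ℝ) (h : ConvexOn ℝ Set.univ (fun x => f x - μ/2*‖x‖^2)) (x y : V) :
    f ((2:ℝ)⁻¹ • (x+y)) ≤ f x/2 + f y/2 - μ/8*‖x-y‖^2 := by
  have hc := h.2 (Set.mem_univ x) (Set.mem_univ y)
    (by norm_num : (0:ℝ) ≤ 1/2) (by norm_num : (0:ℝ) ≤ 1/2) (by norm_num)
  simp only at hc
  have he : (1/2:ℝ) • x + (1/2:ℝ) • y = (2:ℝ)⁻¹ • (x+y) := by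
    rw [smul_add]; norm_num
  rw [he, mid_norm_sq x y] at hc
  simp only [smul_eq_mul] at hc
  linarith

lemma mid_sub_mid {V : Type*} [NormedAddCommGroup V] [InnerProductSpace ℝ V] (x y u v : V) :
    (2:ℝ)⁻¹ • (x+y) - (2:ℝ)⁻¹ • (u+v) = (2:ℝ)⁻¹ • ((x-u)+(y-v)) := by
  rw [← smul_sub]; congr 1; abel

lemma mid_norm_sq_le {V : Type*} [NormedAddCommGroup V] [InnerProductSpace ℝ V] (a b : V) :
    ‖(2:ℝ)⁻¹ • (a+b)‖^2 ≤ ‖a‖^2/2 + ‖b‖^2/2 := by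
  have h := mid_norm_sq a b
  have h2 : (0:ℝ) ≤ ‖a-b‖^2 := sq_nonneg _
  linarith

/-- the minimizer of the multi-task objective F_MTL and the minimizer of
the regularized objective F coincide (in the θ components) when
α_j = λ_j/(λ_j + Σ_{i∈I_j} γ_i). -/
theorem minimizers_coincide {n k d : ℕ}
    (c : Fin n → Fin k) (hc : ∀ j, (clSet c j).Nonempty)
    (f : Fin n → E d → ℝ) (μ L : ℝ) (hμ : 0 < μ) (hL : 0 < L)
    (hdiff : ∀ i, Differentiable ℝ (f i))
    (hsc : ∀ i, ConvexOn ℝ Set.univ (fun x => f i x - μ / 2 * ‖x‖ ^ 2))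
    (hsm : ∀ i, ∀ x y, ‖gradient (f i) x - gradient (f i) y‖ ≤ L * ‖x - y‖)
    (lam : Fin k → ℝ) (hlam : ∀ j, 0 < lam j)
    (γ : Fin n → ℝ) (hγ : ∀ i, 0 < γ i)
    (FMTL : ((Fin n → E d) × (Fin k → E d) × E d) → ℝ)
    (hFMTL : ∀ p, FMTL p = ∑ j, ((∑ i ∈ clSet c j,
        (f i (p.1 i) + γ i / 2 * ‖p.1 i - p.2.1 j‖ ^ 2))
          + lam j / 2 * ‖p.2.1 j - p.2.2‖ ^ 2))
    (α : Fin k → ℝ) (hα : ∀ j, α j = lam j / (lam j + ∑ i ∈ clSet c j, γ i))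
    (F : (Fin n → E d) → ℝ)
    (hF : ∀ θ, F θ = ∑ j, ∑ i ∈ clSet c j,
        (f i (θ i) + (1 - α j) * γ i / 2 * ‖θ i - clAvg c γ j θ‖ ^ 2
          + α j * γ i / 2 * ‖θ i - glAvg c γ α θ‖ ^ 2))
    (p' : (Fin n → E d) × (Fin k → E d) × E d)
    (hp' : ∀ q, FMTL p' ≤ FMTL q)
    (θhat : Fin n → E d)
    (hθhat : ∀ q, F θhat ≤ F q) :
    ∀ i, θhat i = p'.1 i := by
  classical
  rcases Nat.eq_zero_or_pos k with hk0 | hk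
  · intro i
    have hci := c i
    rw [hk0] at hci
    exact hci.elim0
  have hS : ∀ j, (0:ℝ) < ∑ i ∈ clSet c j, γ i :=
    fun j => Finset.sum_pos (fun i _ => hγ i) (hc j)
  -- F θ ≤ FMTL (θ, w, wb) for all w, wb
  have h2 : ∀ (θ : Fin n → E d) (w : Fin k → E d) (wb : E d), F θ ≤ FMTL (θ, w, wb) := by
    intro θ w wb
    have e := hFMTL (θ, w, wb)
    dsimp only at e
    rw [hF θ, e, key_identity hk c hc f lam hlam γ hγ α hα θ w wb]
    have n1 : (0:ℝ) ≤ ∑ j, ((∑ i ∈ clSet c j, γ i) + lam j)/2 * ‖w j - ((∑ i ∈ clSet c j, γ i) + lam j)⁻¹ •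
          ((∑ i ∈ clSet c j, γ i) • clAvg c γ j θ + lam j • wb)‖^2 := by
      refine Finset.sum_nonneg fun j _ => mul_nonneg ?_ (sq_nonneg _)
      have := add_pos (hS j) (hlam j)
      linarith
    have n2 : (0:ℝ) ≤ (∑ j, α j * ∑ i ∈ clSet c j, γ i)/2 * ‖wb - glAvg c γ α θ‖^2 := by
      refine mul_nonneg ?_ (sq_nonneg _)
      have : (0:ℝ) ≤ ∑ j, α j * ∑ i ∈ clSet c j, γ i := by
        refine Finset.sum_nonneg fun j _ => ?_
        rw [hα j]
        have := hS j; have := hlam j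
        positivity
      linarith
    linarith
  -- F θ is attained by FMTL at the optimal (w, wb)
  have h1 : ∀ θ : Fin n → E d, F θ = FMTL (θ,
      fun j => ((∑ i ∈ clSet c j, γ i) + lam j)⁻¹ •
        ((∑ i ∈ clSet c j, γ i) • clAvg c γ j θ + lam j • glAvg c γ α θ),
      glAvg c γ α θ) := by
    intro θ
    have e := hFMTL (θ,
      fun j => ((∑ i ∈ clSet c j, γ i) + lam j)⁻¹ •
        ((∑ i ∈ clSet c j, γ i) • clAvg c γ j θ + lam j • glAvg c γ α θ),
      glAvg c γ α θ)
    dsimp only at e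
    rw [hF θ, e, key_identity hk c hc f lam hlam γ hγ α hα θ _ _]
    simp [sub_self, norm_zero]
  -- the value chain
  set A : (Fin n → E d) × (Fin k → E d) × E d := (θhat,
      fun j => ((∑ i ∈ clSet c j, γ i) + lam j)⁻¹ •
        ((∑ i ∈ clSet c j, γ i) • clAvg c γ j θhat + lam j • glAvg c γ α θhat),
      glAvg c γ α θhat) with hA
  have c1 : F θhat ≤ F p'.1 := hθhat p'.1
  have c2 : F p'.1 ≤ FMTL p' := h2 p'.1 p'.2.1 p'.2.2
  have c3 : FMTL p' ≤ FMTL A := hp' A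
  have c4 : FMTL A = F θhat := (h1 θhat).symm
  have eAp : FMTL A = FMTL p' := by linarith
  -- midpoint inequality
  have hmid : ∀ q r : (Fin n → E d) × (Fin k → E d) × E d,
      FMTL (fun i => (2:ℝ)⁻¹ • (q.1 i + r.1 i), fun j => (2:ℝ)⁻¹ • (q.2.1 j + r.2.1 j),
        (2:ℝ)⁻¹ • (q.2.2 + r.2.2))
      ≤ FMTL q/2 + FMTL r/2 - μ/8 * ∑ j, ∑ i ∈ clSet c j, ‖q.1 i - r.1 i‖^2 := by
    intro q r
    rw [hFMTL, hFMTL, hFMTL]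
    dsimp only
    have perj : ∀ j ∈ (Finset.univ : Finset (Fin k)),
        (∑ i ∈ clSet c j, (f i ((2:ℝ)⁻¹ • (q.1 i + r.1 i))
            + γ i / 2 * ‖(2:ℝ)⁻¹ • (q.1 i + r.1 i) - (2:ℝ)⁻¹ • (q.2.1 j + r.2.1 j)‖ ^ 2))
          + lam j / 2 * ‖(2:ℝ)⁻¹ • (q.2.1 j + r.2.1 j) - (2:ℝ)⁻¹ • (q.2.2 + r.2.2)‖ ^ 2
        ≤ ((∑ i ∈ clSet c j, (f i (q.1 i) + γ i / 2 * ‖q.1 i - q.2.1 j‖ ^ 2))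
            + lam j / 2 * ‖q.2.1 j - q.2.2‖ ^ 2)/2
          + ((∑ i ∈ clSet c j, (f i (r.1 i) + γ i / 2 * ‖r.1 i - r.2.1 j‖ ^ 2))
            + lam j / 2 * ‖r.2.1 j - r.2.2‖ ^ 2)/2
          - μ/8 * ∑ i ∈ clSet c j, ‖q.1 i - r.1 i‖^2 := by
      intro j _
      have peri : ∀ i ∈ clSet c j,
          f i ((2:ℝ)⁻¹ • (q.1 i + r.1 i))
            + γ i / 2 * ‖(2:ℝ)⁻¹ • (q.1 i + r.1 i) - (2:ℝ)⁻¹ • (q.2.1 j + r.2.1 j)‖ ^ 2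
          ≤ ((f i (q.1 i) + γ i / 2 * ‖q.1 i - q.2.1 j‖ ^ 2)/2
            + (f i (r.1 i) + γ i / 2 * ‖r.1 i - r.2.1 j‖ ^ 2)/2
            - μ/8 * ‖q.1 i - r.1 i‖^2) := by
        intro i _
        have hf := strong_mid (f i) μ (hsc i) (q.1 i) (r.1 i)
        have hq : ‖(2:ℝ)⁻¹ • (q.1 i + r.1 i) - (2:ℝ)⁻¹ • (q.2.1 j + r.2.1 j)‖^2
            ≤ ‖q.1 i - q.2.1 j‖^2/2 + ‖r.1 i - r.2.1 j‖^2/2 := by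
          rw [mid_sub_mid]; exact mid_norm_sq_le _ _
        have hγ2 : (0:ℝ) ≤ γ i / 2 := by have := hγ i; linarith
        have := mul_le_mul_of_nonneg_left hq hγ2
        linarith
      have hsumi := Finset.sum_le_sum peri
      have hlamterm : lam j / 2 * ‖(2:ℝ)⁻¹ • (q.2.1 j + r.2.1 j) - (2:ℝ)⁻¹ • (q.2.2 + r.2.2)‖ ^ 2
          ≤ lam j / 2 * (‖q.2.1 j - q.2.2‖^2/2 + ‖r.2.1 j - r.2.2‖^2/2) := by
        refine mul_le_mul_of_nonneg_left ?_ (by have := hlam j; linarith)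
        rw [mid_sub_mid]; exact mid_norm_sq_le _ _
      have hsplit : ∑ i ∈ clSet c j, ((f i (q.1 i) + γ i / 2 * ‖q.1 i - q.2.1 j‖ ^ 2)/2
            + (f i (r.1 i) + γ i / 2 * ‖r.1 i - r.2.1 j‖ ^ 2)/2
            - μ/8 * ‖q.1 i - r.1 i‖^2)
          = (∑ i ∈ clSet c j, (f i (q.1 i) + γ i / 2 * ‖q.1 i - q.2.1 j‖ ^ 2))/2
            + (∑ i ∈ clSet c j, (f i (r.1 i) + γ i / 2 * ‖r.1 i - r.2.1 j‖ ^ 2))/2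
            - μ/8 * ∑ i ∈ clSet c j, ‖q.1 i - r.1 i‖^2 := by
        rw [Finset.sum_sub_distrib, Finset.sum_add_distrib, ← Finset.sum_div, ← Finset.sum_div,
          ← Finset.mul_sum]
      rw [hsplit] at hsumi
      linarith
    have hsumj := Finset.sum_le_sum perj
    have hsplitj : ∑ j, (((∑ i ∈ clSet c j, (f i (q.1 i) + γ i / 2 * ‖q.1 i - q.2.1 j‖ ^ 2))
            + lam j / 2 * ‖q.2.1 j - q.2.2‖ ^ 2)/2
          + ((∑ i ∈ clSet c j, (f i (r.1 i) + γ i / 2 * ‖r.1 i - r.2.1 j‖ ^ 2))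
            + lam j / 2 * ‖r.2.1 j - r.2.2‖ ^ 2)/2
          - μ/8 * ∑ i ∈ clSet c j, ‖q.1 i - r.1 i‖^2)
        = (∑ j, ((∑ i ∈ clSet c j, (f i (q.1 i) + γ i / 2 * ‖q.1 i - q.2.1 j‖ ^ 2))
            + lam j / 2 * ‖q.2.1 j - q.2.2‖ ^ 2))/2
          + (∑ j, ((∑ i ∈ clSet c j, (f i (r.1 i) + γ i / 2 * ‖r.1 i - r.2.1 j‖ ^ 2))
            + lam j / 2 * ‖r.2.1 j - r.2.2‖ ^ 2))/2
          - μ/8 * ∑ j, ∑ i ∈ clSet c j, ‖q.1 i - r.1 i‖^2 := by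
      rw [Finset.sum_sub_distrib, Finset.sum_add_distrib, ← Finset.sum_div, ← Finset.sum_div,
        ← Finset.mul_sum]
    rw [hsplitj] at hsumj
    exact hsumj
  -- apply midpoint inequality with q = A, r = p'
  have hm := hmid A p'
  have hm2 := hp' (fun i => (2:ℝ)⁻¹ • (A.1 i + p'.1 i), fun j => (2:ℝ)⁻¹ • (A.2.1 j + p'.2.1 j),
        (2:ℝ)⁻¹ • (A.2.2 + p'.2.2))
  have hA1 : A.1 = θhat := by rw [hA]
  rw [hA1] at hm
  have hT : μ/8 * ∑ j, ∑ i ∈ clSet c j, ‖θhat i - p'.1 i‖^2 ≤ 0 := by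
    linarith
  have hTnn : (0:ℝ) ≤ ∑ j, ∑ i ∈ clSet c j, ‖θhat i - p'.1 i‖^2 :=
    Finset.sum_nonneg fun j _ => Finset.sum_nonneg fun i _ => sq_nonneg _
  have hT0 : ∑ j, ∑ i ∈ clSet c j, ‖θhat i - p'.1 i‖^2 = 0 := by nlinarith
  have hzero : ∀ j ∈ (Finset.univ : Finset (Fin k)), ∀ i ∈ clSet c j,
      ‖θhat i - p'.1 i‖^2 = 0 := by
    have hj := (Finset.sum_eq_zero_iff_of_nonneg
      (fun j _ => Finset.sum_nonneg fun i _ => sq_nonneg (‖θhat i - p'.1 i‖))).mp hT0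
    intro j hjmem
    exact (Finset.sum_eq_zero_iff_of_nonneg (fun i _ => sq_nonneg _)).mp (hj j hjmem)
  intro i
  have hmem : i ∈ clSet c (c i) := by simp [clSet]
  have := hzero (c i) (Finset.mem_univ _) i hmem
  have hnorm : ‖θhat i - p'.1 i‖ = 0 := by
    have := sq_eq_zero_iff.mp this
    exact this
  rw [norm_eq_zero, sub_eq_zero] at hnorm
  exact hnorm
end
end

section
/- Let F : ℝ^D → ℝ be differentiable and μ-strongly convex with minimizer x*. Let Ω be a finite set with probability weights q : Ω → [0,1], Σ_ω q(ω) = 1, and let g : ℝ^D × Ω → ℝ^D satisfy: (i) Σ_ω q(ω) g(x,ω) = ∇F(x) for all x (unbiasedness); and (ii) Σ_ω q(ω) ‖g(x,ω) − g(x*,ω)‖² ≤ 2𝓛 (F(x) − F(x*)) for all x (expected smoothness), for some 𝓛 > 0. Let σ² = Σ_ω q(ω) ‖g(x*,ω)‖². Consider the SGD iterates x^{t+1} = x^t − η g(x^t, ω_t), where ω_0, ω_1, … are drawn i.i.d. from q and x^0 is deterministic. If 0 < η ≤ 1/(2𝓛), then for all t ≥ 0, E‖x^t − x*‖² ≤ (1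 − ημ)^t ‖x^0 − x*‖² + 2ησ²/μ, where the expectation is over the i.i.d. draws ω_0,…,ω_{t−1}. -/
open scoped BigOperators RealInnerProductSpace

noncomputable section


lemma jensen_norm_sq {Ω : Type} [Fintype Ω] {D : ℕ}
    (q : Ω → ℝ) (hq0 : ∀ ω, 0 ≤ q ω) (hq1 : ∑ ω, q ω = 1)
    (v : Ω → EuclideanSpace ℝ (Fin D)) :
    ‖∑ ω, q ω • v ω‖ ^ 2 ≤ ∑ ω, q ω * ‖v ω‖ ^ 2 := by
  have h1 : ‖∑ ω, q ω • v ω‖ ≤ ∑ ω, q ω * ‖v ω‖ := by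
    refine (norm_sum_le _ _).trans_eq ?_
    congr 1; funext ω
    rw [norm_smul, Real.norm_eq_abs, abs_of_nonneg (hq0 ω)]
  have h2 : (∑ ω, q ω * ‖v ω‖) ^ 2 ≤ (∑ ω, q ω) * ∑ ω, q ω * ‖v ω‖ ^ 2 := by
    have := Finset.sum_mul_sq_le_sq_mul_sq Finset.univ
      (fun ω => Real.sqrt (q ω)) (fun ω => Real.sqrt (q ω) * ‖v ω‖)
    calc (∑ ω, q ω * ‖v ω‖) ^ 2
        = (∑ ω, Real.sqrt (q ω) * (Real.sqrt (q ω) * ‖v ω‖)) ^ 2 := by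
          congr 1; refine Finset.sum_congr rfl fun ω _ => ?_
          rw [← mul_assoc, Real.mul_self_sqrt (hq0 ω)]
      _ ≤ (∑ ω, Real.sqrt (q ω) ^ 2) * ∑ ω, (Real.sqrt (q ω) * ‖v ω‖) ^ 2 := this
      _ = (∑ ω, q ω) * ∑ ω, q ω * ‖v ω‖ ^ 2 := by
          congr 1
          · exact Finset.sum_congr rfl fun ω _ => Real.sq_sqrt (hq0 ω)
          · refine Finset.sum_congr rfl fun ω _ => ?_
            rw [mul_pow, Real.sq_sqrt (hq0 ω)]
  have h0 : 0 ≤ ∑ ω, q ω * ‖v ω‖ :=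
    Finset.sum_nonneg fun ω _ => mul_nonneg (hq0 ω) (norm_nonneg _)
  calc ‖∑ ω, q ω • v ω‖ ^ 2 ≤ (∑ ω, q ω * ‖v ω‖) ^ 2 :=
        pow_le_pow_left₀ (norm_nonneg _) h1 2
    _ ≤ (∑ ω, q ω) * ∑ ω, q ω * ‖v ω‖ ^ 2 := h2
    _ = ∑ ω, q ω * ‖v ω‖ ^ 2 := by rw [hq1, one_mul]

lemma one_step {Ω : Type} [Fintype Ω] {D : ℕ}
    (q : Ω → ℝ) (hq0 : ∀ ω, 0 ≤ q ω) (hq1 : ∑ ω, q ω = 1)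
    (v w : Ω → EuclideanSpace ℝ (Fin D)) (z : EuclideanSpace ℝ (Fin D))
    (μ LL σ2 η P : ℝ) (hη : 0 < η)
    (hη2 : η * (2 * LL) ≤ 1) (hP : 0 ≤ P)
    (hI : P + μ / 2 * ‖z‖ ^ 2 ≤ ⟪∑ ω, q ω • v ω, z⟫)
    (hV : ∑ ω, q ω * ‖v ω - w ω‖ ^ 2 ≤ 2 * LL * P)
    (hW : ∑ ω, q ω * ‖w ω‖ ^ 2 = σ2) :
    ∑ ω, q ω * ‖z - η • v ω‖ ^ 2 ≤ (1 - η * μ) * ‖z‖ ^ 2 + 2 * η ^ 2 * σ2 := by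
  have expand : ∀ ω, ‖z - η • v ω‖ ^ 2
      = ‖z‖ ^ 2 - 2 * η * ⟪v ω, z⟫ + η ^ 2 * ‖v ω‖ ^ 2 := by
    intro ω
    rw [norm_sub_sq_real, real_inner_smul_right, real_inner_comm z (v ω), norm_smul,
      Real.norm_eq_abs, abs_of_pos hη, mul_pow]
    ring
  have hinner : ⟪∑ ω, q ω • v ω, z⟫ = ∑ ω, q ω * ⟪v ω, z⟫ := by
    rw [sum_inner]
    exact Finset.sum_congr rfl fun ω _ => real_inner_smul_left _ _ _
  have hsum : ∑ ω, q ω * ‖z - η • v ω‖ ^ 2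
      = ‖z‖ ^ 2 - 2 * η * ⟪∑ ω, q ω • v ω, z⟫ + η ^ 2 * ∑ ω, q ω * ‖v ω‖ ^ 2 := by
    calc ∑ ω, q ω * ‖z - η • v ω‖ ^ 2
        = ∑ ω, (q ω * ‖z‖ ^ 2 - 2 * η * (q ω * ⟪v ω, z⟫) + η ^ 2 * (q ω * ‖v ω‖ ^ 2)) :=
          Finset.sum_congr rfl fun ω _ => by rw [expand ω]; ring
      _ = (∑ ω, q ω) * ‖z‖ ^ 2 - 2 * η * (∑ ω, q ω * ⟪v ω, z⟫)
            + η ^ 2 * ∑ ω, q ω * ‖v ω‖ ^ 2 := by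
          rw [Finset.sum_add_distrib, Finset.sum_sub_distrib, ← Finset.sum_mul,
            ← Finset.mul_sum, ← Finset.mul_sum]
      _ = _ := by rw [hq1, one_mul, hinner]
  have hB : ∑ ω, q ω * ‖v ω‖ ^ 2 ≤ 2 * (2 * LL * P) + 2 * σ2 := by
    have key : ∀ ω, ‖v ω‖ ^ 2 ≤ 2 * ‖v ω - w ω‖ ^ 2 + 2 * ‖w ω‖ ^ 2 := by
      intro ω
      have h := norm_add_le (v ω - w ω) (w ω)
      rw [sub_add_cancel] at h
      nlinarith [norm_nonneg (v ω), norm_nonneg (v ω - w ω), norm_nonneg (w ω),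
        sq_nonneg (‖v ω - w ω‖ - ‖w ω‖)]
    calc ∑ ω, q ω * ‖v ω‖ ^ 2
        ≤ ∑ ω, (2 * (q ω * ‖v ω - w ω‖ ^ 2) + 2 * (q ω * ‖w ω‖ ^ 2)) :=
          Finset.sum_le_sum fun ω _ => by nlinarith [mul_le_mul_of_nonneg_left (key ω) (hq0 ω)]
      _ = 2 * (∑ ω, q ω * ‖v ω - w ω‖ ^ 2) + 2 * ∑ ω, q ω * ‖w ω‖ ^ 2 := by
          rw [Finset.sum_add_distrib, ← Finset.mul_sum, ← Finset.mul_sum]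
      _ ≤ 2 * (2 * LL * P) + 2 * σ2 := by rw [hW]; linarith
  rw [hsum]
  have e1 : 2 * η * (P + μ / 2 * ‖z‖ ^ 2) ≤ 2 * η * ⟪∑ ω, q ω • v ω, z⟫ :=
    mul_le_mul_of_nonneg_left hI (by positivity)
  have e2 : η ^ 2 * (∑ ω, q ω * ‖v ω‖ ^ 2) ≤ η ^ 2 * (2 * (2 * LL * P) + 2 * σ2) :=
    mul_le_mul_of_nonneg_left hB (sq_nonneg η)
  have e3 : 0 ≤ (1 - η * (2 * LL)) * (2 * η * P) :=
    mul_nonneg (by linarith) (by positivity)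
  nlinarith [e1, e2, e3]

/-- convergence of SGD under unbiasedness and expected smoothness.
For the iterates x^{t+1} = x^t − η g(x^t, ω_t) with i.i.d. draws ω_t from the finite
probability distribution q, if 0 < η ≤ 1/(2𝓛) then
E‖x^t − x*‖² ≤ (1 − ημ)^t ‖x^0 − x*‖² + 2ησ²/μ, the expectation being the finite
weighted sum over all length-t paths of draws. -/
theorem sgd_convergence {D : ℕ} {Ω : Type} [Fintype Ω] [Nonempty Ω]
    (F : EuclideanSpace ℝ (Fin D) → ℝ) (μ : ℝ) (hμ : 0 < μ)
    (hdiff : Differentiable ℝ F)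
    (hsc : ∀ x y, F x + ⟪gradient F x, y - x⟫ + μ / 2 * ‖y - x‖ ^ 2 ≤ F y)
    (xstar : EuclideanSpace ℝ (Fin D)) (hmin : ∀ x, F xstar ≤ F x)
    (q : Ω → ℝ) (hq : ∀ ω, 0 ≤ q ω ∧ q ω ≤ 1) (hq1 : ∑ ω, q ω = 1)
    (g : EuclideanSpace ℝ (Fin D) → Ω → EuclideanSpace ℝ (Fin D))
    (LL : ℝ) (hLL : 0 < LL)
    (hunbiased : ∀ x, ∑ ω, q ω • g x ω = gradient F x)
    (hes : ∀ x, ∑ ω, q ω * ‖g x ω - g xstar ω‖ ^ 2 ≤ 2 * LL * (F x - F xstar))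
    (σ2 : ℝ) (hσ : σ2 = ∑ ω, q ω * ‖g xstar ω‖ ^ 2)
    (η : ℝ) (hη : 0 < η) (hη2 : η ≤ 1 / (2 * LL))
    (x0 : EuclideanSpace ℝ (Fin D))
    (x : (ℕ → Ω) → ℕ → EuclideanSpace ℝ (Fin D))
    (hx0 : ∀ ω, x ω 0 = x0)
    (hxstep : ∀ ω t, x ω (t + 1) = x ω t - η • g (x ω t) (ω t)) :
    ∀ t : ℕ,
      ∑ path : Fin t → Ω, (∏ s, q (path s)) *
          ‖x (fun s => if h : s < t then path ⟨s, h⟩ else Classical.arbitrary Ω) t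
            - xstar‖ ^ 2
        ≤ (1 - η * μ) ^ t * ‖x0 - xstar‖ ^ 2 + 2 * η * σ2 / μ := by
  classical
  have hq0 : ∀ ω, 0 ≤ q ω := fun ω => (hq ω).1
  have hσ2 : 0 ≤ σ2 := by
    rw [hσ]; exact Finset.sum_nonneg fun ω _ => mul_nonneg (hq0 ω) (sq_nonneg _)
  have hrhs0 : 0 ≤ 2 * η * σ2 / μ :=
    div_nonneg (mul_nonneg (by positivity) hσ2) hμ.le
  by_cases hdeg : ∀ y : EuclideanSpace ℝ (Fin D), y = xstar
  · -- degenerate case: the space is a single point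
    intro t
    have hL : (∑ path : Fin t → Ω, (∏ s, q (path s)) *
        ‖x (fun s => if h : s < t then path ⟨s, h⟩ else Classical.arbitrary Ω) t
          - xstar‖ ^ 2) = 0 := by
      refine Finset.sum_eq_zero fun p _ => ?_
      rw [hdeg (x _ t), sub_self, norm_zero]
      norm_num
    rw [hL, hdeg x0, sub_self, norm_zero]
    norm_num
    exact hrhs0
  · push_neg at hdeg
    obtain ⟨y0, hy0⟩ := hdeg
    -- gradient at the minimizer is zero
    have hgrad0 : gradient F xstar = 0 := by
      have h1 : fderiv ℝ F xstar = 0 :=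
        IsLocalMin.fderiv_eq_zero (Filter.Eventually.of_forall hmin)
      rw [gradient, h1, map_zero]
    -- μ ≤ LL
    have hP0 : 0 < F y0 - F xstar := by
      have h := hsc xstar y0
      rw [hgrad0, inner_zero_left] at h
      have hn : 0 < ‖y0 - xstar‖ := norm_pos_iff.2 (sub_ne_zero.2 hy0)
      nlinarith [mul_pos (half_pos hμ) (pow_pos hn 2)]
    have hJ : ‖gradient F y0‖ ^ 2 ≤ ∑ ω, q ω * ‖g y0 ω - g xstar ω‖ ^ 2 := by
      have hsub : ∑ ω, q ω • (g y0 ω - g xstar ω) = gradient F y0 := by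
        simp_rw [smul_sub]
        rw [Finset.sum_sub_distrib, hunbiased, hunbiased, hgrad0, sub_zero]
      calc ‖gradient F y0‖ ^ 2 = ‖∑ ω, q ω • (g y0 ω - g xstar ω)‖ ^ 2 := by rw [hsub]
        _ ≤ _ := jensen_norm_sq q hq0 hq1 _
    have hPL : 2 * μ * (F y0 - F xstar) ≤ ‖gradient F y0‖ ^ 2 := by
      have h := hsc y0 xstar
      have hsym : ⟪gradient F y0, xstar - y0⟫ = -⟪gradient F y0, y0 - xstar⟫ := by
        rw [show xstar - y0 = -(y0 - xstar) by abel, inner_neg_right]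
      rw [hsym, norm_sub_rev] at h
      have hcs := real_inner_le_norm (gradient F y0) (y0 - xstar)
      nlinarith [sq_nonneg (‖gradient F y0‖ - μ * ‖y0 - xstar‖), hμ,
        norm_nonneg (y0 - xstar)]
    have hmuL : μ ≤ LL := by nlinarith [hes y0, hJ, hPL, hP0]
    have hη2' : η * (2 * LL) ≤ 1 := by
      rw [le_div_iff₀ (by positivity)] at hη2; exact hη2
    have hr0 : 0 ≤ 1 - η * μ := by nlinarith [mul_nonneg hη.le (sub_nonneg.2 hmuL)]
    -- x depends only on the prefix of the draws
    have hdep : ∀ t (ω ω' : ℕ → Ω), (∀ s, s < t → ω s = ω' s) → x ω t = x ω' t := by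
      intro t
      induction t with
      | zero => intro ω ω' _; rw [hx0, hx0]
      | succ t ih =>
        intro ω ω' h
        rw [hxstep, hxstep, ih ω ω' (fun s hs => h s (Nat.lt_succ_of_lt hs)),
          h t (Nat.lt_succ_self t)]
    -- total mass of paths is 1
    have hpaths : ∀ t : ℕ, ∑ p : Fin t → Ω, ∏ s, q (p s) = 1 := by
      intro t
      induction t with
      | zero => simp
      | succ t ih =>
        rw [← Equiv.sum_comp (Fin.snocEquiv (fun _ => Ω)), Fintype.sum_prod_type]
        have : ∀ (ω : Ω) (p : Fin t → Ω),
            (∏ s, q ((Fin.snocEquiv (fun _ => Ω)) (ω, p) s)) = (∏ s, q (p s)) * q ω := by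
          intro ω p
          have : (fun s => q ((Fin.snocEquiv (fun _ => Ω)) (ω, p) s))
              = Fin.snoc (fun s => q (p s)) (q ω) := by
            funext s
            simp only [Fin.snocEquiv_apply]
            exact congrFun (Fin.comp_snoc q p ω) s
          rw [show (∏ s, q ((Fin.snocEquiv (fun _ => Ω)) (ω, p) s))
              = ∏ s, (Fin.snoc (fun s => q (p s)) (q ω) : Fin (t+1) → ℝ) s from
            Finset.prod_congr rfl fun s _ => congrFun this s]
          exact Fin.prod_snoc _ _
        calc ∑ ω : Ω, ∑ p : Fin t → Ω, ∏ s, q ((Fin.snocEquiv (fun _ => Ω)) (ω, p) s)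
            = ∑ ω : Ω, ∑ p : Fin t → Ω, (∏ s, q (p s)) * q ω :=
              Finset.sum_congr rfl fun ω _ => Finset.sum_congr rfl fun p _ => this ω p
          _ = ∑ ω : Ω, q ω := by
              refine Finset.sum_congr rfl fun ω _ => ?_
              rw [← Finset.sum_mul, ih, one_mul]
          _ = 1 := hq1
    -- the one-step contraction for any point y
    have step : ∀ y : EuclideanSpace ℝ (Fin D),
        ∑ ω, q ω * ‖(y - η • g y ω) - xstar‖ ^ 2
          ≤ (1 - η * μ) * ‖y - xstar‖ ^ 2 + 2 * η ^ 2 * σ2 := by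
      intro y
      have hre : ∀ ω : Ω, (y - η • g y ω) - xstar = (y - xstar) - η • g y ω := fun ω => by
        abel
      have hI : (F y - F xstar) + μ / 2 * ‖y - xstar‖ ^ 2
          ≤ ⟪∑ ω, q ω • g y ω, y - xstar⟫ := by
        rw [hunbiased]
        have h := hsc y xstar
        have h1 : ⟪gradient F y, xstar - y⟫ = -⟪gradient F y, y - xstar⟫ := by
          rw [show xstar - y = -(y - xstar) by abel, inner_neg_right]
        rw [h1, norm_sub_rev] at h
        linarith
      calc ∑ ω, q ω * ‖(y - η • g y ω) - xstar‖ ^ 2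
          = ∑ ω, q ω * ‖(y - xstar) - η • g y ω‖ ^ 2 :=
            Finset.sum_congr rfl fun ω _ => by rw [hre ω]
        _ ≤ (1 - η * μ) * ‖y - xstar‖ ^ 2 + 2 * η ^ 2 * σ2 :=
            one_step q hq0 hq1 (g y) (g xstar) (y - xstar) μ LL σ2 η (F y - F xstar)
              hη hη2' (sub_nonneg.2 (hmin y)) hI (hes y) hσ.symm
    -- main induction
    intro t
    induction t with
    | zero =>
      have : ∑ path : Fin 0 → Ω, (∏ s, q (path s)) *
          ‖x (fun s => if h : s < 0 then path ⟨s, h⟩ else Classical.arbitrary Ω) 0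
            - xstar‖ ^ 2 = ‖x0 - xstar‖ ^ 2 := by
        rw [Finset.sum_eq_single_of_mem (Fin.elim0) (Finset.mem_univ _)]
        · rw [hx0]; simp
        · intro b _ hb
          exact absurd (funext fun i => i.elim0) hb
      rw [this, pow_zero, one_mul]
      linarith
    | succ t ih =>
      have hsplit : ∑ path : Fin (t+1) → Ω, (∏ s, q (path s)) *
            ‖x (fun s => if h : s < t+1 then path ⟨s, h⟩ else Classical.arbitrary Ω) (t+1)
              - xstar‖ ^ 2
          = ∑ p : Fin t → Ω, (∏ s, q (p s)) * ∑ ω : Ω, q ω *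
            ‖(x (fun s => if h : s < t then p ⟨s, h⟩ else Classical.arbitrary Ω) t
              - η • g (x (fun s => if h : s < t then p ⟨s, h⟩ else Classical.arbitrary Ω) t) ω)
              - xstar‖ ^ 2 := by
        rw [← Equiv.sum_comp (Fin.snocEquiv (fun _ => Ω)), Fintype.sum_prod_type,
          Finset.sum_comm]
        refine Finset.sum_congr rfl fun p _ => ?_
        rw [Finset.mul_sum]
        refine Finset.sum_congr rfl fun ω _ => ?_
        have hprod : (∏ s, q ((Fin.snocEquiv (fun _ => Ω)) (ω, p) s))
            = (∏ s, q (p s)) * q ω := by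
          have hfe : (fun s => q ((Fin.snocEquiv (fun _ => Ω)) (ω, p) s))
              = Fin.snoc (fun s => q (p s)) (q ω) := by
            funext s
            simp only [Fin.snocEquiv_apply]
            exact congrFun (Fin.comp_snoc q p ω) s
          rw [show (∏ s, q ((Fin.snocEquiv (fun _ => Ω)) (ω, p) s))
              = ∏ s, (Fin.snoc (fun s => q (p s)) (q ω) : Fin (t+1) → ℝ) s from
            Finset.prod_congr rfl fun s _ => congrFun hfe s]
          exact Fin.prod_snoc _ _
        have hxval : x (fun s => if h : s < t+1 then (Fin.snocEquiv (fun _ => Ω)) (ω, p) ⟨s, h⟩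
              else Classical.arbitrary Ω) (t+1)
            = x (fun s => if h : s < t then p ⟨s, h⟩ else Classical.arbitrary Ω) t
              - η • g (x (fun s => if h : s < t then p ⟨s, h⟩ else Classical.arbitrary Ω) t) ω := by
          rw [hxstep]
          have h1 : (if h : t < t+1 then (Fin.snocEquiv (fun _ => Ω)) (ω, p) ⟨t, h⟩
              else Classical.arbitrary Ω) = ω := by
            rw [dif_pos (Nat.lt_succ_self t)]
            simp only [Fin.snocEquiv_apply]
            exact Fin.snoc_last ..
          have h2 : x (fun s => if h : s < t+1 then (Fin.snocEquiv (fun _ => Ω)) (ω, p) ⟨s, h⟩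
                else Classical.arbitrary Ω) t
              = x (fun s => if h : s < t then p ⟨s, h⟩ else Classical.arbitrary Ω) t := by
            apply hdep
            intro s hs
            rw [dif_pos (Nat.lt_succ_of_lt hs), dif_pos hs]
            simp only [Fin.snocEquiv_apply]
            have e : (⟨s, Nat.lt_succ_of_lt hs⟩ : Fin (t+1)) = Fin.castSucc ⟨s, hs⟩ := rfl
            rw [e, Fin.snoc_castSucc]
          rw [h1, h2]
        rw [hprod, hxval]
        ring
      rw [hsplit]
      have hprodnn : ∀ p : Fin t → Ω, 0 ≤ ∏ s, q (p s) :=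
        fun p => Finset.prod_nonneg fun s _ => hq0 _
      calc ∑ p : Fin t → Ω, (∏ s, q (p s)) * ∑ ω : Ω, q ω *
            ‖(x (fun s => if h : s < t then p ⟨s, h⟩ else Classical.arbitrary Ω) t
              - η • g (x (fun s => if h : s < t then p ⟨s, h⟩ else Classical.arbitrary Ω) t) ω)
              - xstar‖ ^ 2
          ≤ ∑ p : Fin t → Ω, (∏ s, q (p s)) *
              ((1 - η * μ) * ‖x (fun s => if h : s < t then p ⟨s, h⟩
                else Classical.arbitrary Ω) t - xstar‖ ^ 2 + 2 * η ^ 2 * σ2) :=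
            Finset.sum_le_sum fun p _ => mul_le_mul_of_nonneg_left (step _) (hprodnn p)
        _ = (1 - η * μ) * (∑ p : Fin t → Ω, (∏ s, q (p s)) *
              ‖x (fun s => if h : s < t then p ⟨s, h⟩ else Classical.arbitrary Ω) t
                - xstar‖ ^ 2) + 2 * η ^ 2 * σ2 * (∑ p : Fin t → Ω, ∏ s, q (p s)) := by
            rw [Finset.mul_sum, Finset.mul_sum, ← Finset.sum_add_distrib]
            exact Finset.sum_congr rfl fun p _ => by ring
        _ ≤ (1 - η * μ) * ((1 - η * μ) ^ t * ‖x0 - xstar‖ ^ 2 + 2 * η * σ2 / μ)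
              + 2 * η ^ 2 * σ2 * 1 := by
            rw [hpaths]
            exact add_le_add (mul_le_mul_of_nonneg_left ih hr0) le_rfl
        _ = (1 - η * μ) ^ (t+1) * ‖x0 - xstar‖ ^ 2 + 2 * η * σ2 / μ := by
            have hK : (1 - η * μ) * (2 * η * σ2 / μ) + 2 * η ^ 2 * σ2 = 2 * η * σ2 / μ := by
              field_simp
              ring
            rw [pow_succ]
            linear_combination hK
end
end

section
/- Let C_1, C_2, L > 0. For p_0 ∈ (0,1) and p ∈ [0,1), define L̃(p_0, p) = max{ 2C_1/p_0 , 2C_2/(p_0 + 2(1−p_0)p) , L/((1−p_0)(1−p)) }. (a) If C_2 > C_1, then L̃(p_0, p) ≥ C_1 + C_2 + L for all (p_0, p) ∈ (0,1) × [0,1), with equality at p_0 = 2C_1/(C_1 + C_2 + L) and p = (C_2 − C_1)/(C_2 − C_1 + L). (b) If C_2 ≤ C_1, then L̃(p_0, p) ≥ 2C_1 + L for all (p_0, p) ∈ (0,1) × [0,1), with equality at p_0 = 2C_1/(2C_1 + L) and p = 0. -/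
noncomputable section

/-- The upper bound L̃(p_0, p) = max{2C_1/p_0, 2C_2/(p_0 + 2(1−p_0)p), L/((1−p_0)(1−p))}. -/
def Ltilde (C1 C2 L p0 p : ℝ) : ℝ :=
  max (max (2 * C1 / p0) (2 * C2 / (p0 + 2 * (1 - p0) * p))) (L / ((1 - p0) * (1 - p)))

/-- optimization of L̃ over (p_0, p) ∈ (0,1) × [0,1).
(a) If C_2 > C_1 the minimum value is C_1 + C_2 + L, attained at
p_0 = 2C_1/(C_1+C_2+L), p = (C_2−C_1)/(C_2−C_1+L).
(b) If C_2 ≤ C_1 the minimum value is 2C_1 + L, attained at p_0 = 2C_1/(2C_1+L), p = 0. -/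
theorem Ltilde_min (C1 C2 L : ℝ) (hC1 : 0 < C1) (hC2 : 0 < C2) (hL : 0 < L) :
    (C2 > C1 →
      (∀ p0 p : ℝ, p0 ∈ Set.Ioo (0 : ℝ) 1 → p ∈ Set.Ico (0 : ℝ) 1 →
        C1 + C2 + L ≤ Ltilde C1 C2 L p0 p) ∧
      Ltilde C1 C2 L (2 * C1 / (C1 + C2 + L)) ((C2 - C1) / (C2 - C1 + L))
        = C1 + C2 + L) ∧
    (C2 ≤ C1 →
      (∀ p0 p : ℝ, p0 ∈ Set.Ioo (0 : ℝ) 1 → p ∈ Set.Ico (0 : ℝ) 1 →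
        2 * C1 + L ≤ Ltilde C1 C2 L p0 p) ∧
      Ltilde C1 C2 L (2 * C1 / (2 * C1 + L)) 0 = 2 * C1 + L) := by
  constructor
  · intro hlt
    constructor
    · intro p0 p hp0 hp
      obtain ⟨h0, h1⟩ := hp0
      obtain ⟨hq0, hq1⟩ := hp
      by_contra hcon
      push_neg at hcon
      unfold Ltilde at hcon
      rw [max_lt_iff, max_lt_iff] at hcon
      obtain ⟨⟨ha, hb⟩, hc⟩ := hcon
      have hMpos : (0:ℝ) < C1 + C2 + L := by positivity
      have hd2 : 0 < p0 + 2 * (1 - p0) * p := by nlinarith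
      have hd3 : 0 < (1 - p0) * (1 - p) := by nlinarith
      rw [div_lt_iff₀ h0] at ha
      rw [div_lt_iff₀ hd2] at hb
      rw [div_lt_iff₀ hd3] at hc
      nlinarith [ha, hb, hc]
    · have hM : (0:ℝ) < C1 + C2 + L := by positivity
      have hD : (0:ℝ) < C2 - C1 + L := by nlinarith
      unfold Ltilde
      have e1 : 2 * C1 / (2 * C1 / (C1 + C2 + L)) = C1 + C2 + L := by
        rw [div_div_eq_mul_div]
        field_simp
      have hden : (2 * C1 / (C1 + C2 + L)) +
          2 * (1 - 2 * C1 / (C1 + C2 + L)) * ((C2 - C1) / (C2 - C1 + L))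
          = 2 * C2 / (C1 + C2 + L) := by
        field_simp
        ring
      have e2 : 2 * C2 / ((2 * C1 / (C1 + C2 + L)) +
          2 * (1 - 2 * C1 / (C1 + C2 + L)) * ((C2 - C1) / (C2 - C1 + L)))
          = C1 + C2 + L := by
        rw [hden, div_div_eq_mul_div]
        field_simp
      have hden3 : (1 - 2 * C1 / (C1 + C2 + L)) * (1 - (C2 - C1) / (C2 - C1 + L))
          = L / (C1 + C2 + L) := by
        field_simp
        ring
      have e3 : L / ((1 - 2 * C1 / (C1 + C2 + L)) * (1 - (C2 - C1) / (C2 - C1 + L)))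
          = C1 + C2 + L := by
        rw [hden3, div_div_eq_mul_div]
        field_simp
      rw [e1, e2, e3, max_self, max_self]
  · intro hle
    constructor
    · intro p0 p hp0 hp
      obtain ⟨h0, h1⟩ := hp0
      obtain ⟨hq0, hq1⟩ := hp
      by_contra hcon
      push_neg at hcon
      unfold Ltilde at hcon
      rw [max_lt_iff, max_lt_iff] at hcon
      obtain ⟨⟨ha, hb⟩, hc⟩ := hcon
      have hMpos : (0:ℝ) < 2 * C1 + L := by positivity
      have hd3 : 0 < (1 - p0) * (1 - p) := by nlinarith
      rw [div_lt_iff₀ h0] at ha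
      rw [div_lt_iff₀ hd3] at hc
      nlinarith [ha, hc, mul_nonneg (le_of_lt (sub_pos.mpr h1)) (hq0)]
    · have hM : (0:ℝ) < 2 * C1 + L := by positivity
      unfold Ltilde
      have e1 : 2 * C1 / (2 * C1 / (2 * C1 + L)) = 2 * C1 + L := by
        rw [div_div_eq_mul_div]
        field_simp
      have hden : (2 * C1 / (2 * C1 + L)) + 2 * (1 - 2 * C1 / (2 * C1 + L)) * 0
          = 2 * C1 / (2 * C1 + L) := by ring
      have e2 : 2 * C2 / ((2 * C1 / (2 * C1 + L)) + 2 * (1 - 2 * C1 / (2 * C1 + L)) * 0)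
          ≤ 2 * C1 + L := by
        rw [hden]
        rw [div_le_iff₀ (by positivity)]
        have h : (2 * C1 + L) * (2 * C1 / (2 * C1 + L)) = 2 * C1 := by field_simp
        rw [h]
        linarith
      have hden3 : (1 - 2 * C1 / (2 * C1 + L)) * (1 - (0:ℝ)) = L / (2 * C1 + L) := by
        field_simp
        ring
      have e3 : L / ((1 - 2 * C1 / (2 * C1 + L)) * (1 - (0:ℝ))) = 2 * C1 + L := by
        rw [hden3, div_div_eq_mul_div]
        field_simp
      rw [e1, e3, max_eq_left e2, max_self]
end
end
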